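/- Let μ, ν : ℝ → ℝ be functions continuous at 0 with μ₀ := μ(0) ≠ 0 and ν₀ := ν(0). For each t let P_t be the 4×4 matrix with rows (0,0,μ(t),0), (0,0,0,0), (0,0,0,μ(t)), (0,0,0,0) and Q_t the matrix with rows (0,ν(t),0,0), (0,t·ν(t),0,ν(t)), (0,0,0,0), (0,0,0,0). Then as t → 0, exp(P_t) converges to M₀(0,μ₀) and exp(Q_t) converges to M₀(ν₀,0), where M₀(x,y) is the matrix with rows (1,x,y,(x²+y²)/2), (0,1,0,x), (0,0,1,y), (0,0,0,1); and the resulting cusp shape (x₂ + i·y₂)/(x₁ + i·y₁) ∈ ℂ computed from the L₀-parameters (x₁,y₁) = (0,μ₀) of the first limit and (x₂,y₂) = (ν₀,0) of the second limit equals −i·ν₀/μ₀, which has real part zero. -/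

import Mathlib

open scoped Topology
open Complex


attribute [local instance] Matrix.linftyOpNormedRing Matrix.linftyOpNormedAlgebra

lemma exp_nilp3 (A : Matrix (Fin 4) (Fin 4) ℝ) (h : A ^ 3 = 0) :
    NormedSpace.exp A = 1 + A + (2⁻¹ : ℝ) • A ^ 2 := by
  simp only [NormedSpace.exp_eq_tsum ℝ]
  rw [tsum_eq_sum (s := Finset.range 3) (f := fun n => (((Nat.factorial n : ℕ) : ℝ)⁻¹) • A ^ n)]
  · simp [Finset.sum_range_succ, Nat.factorial]
  · intro n hn
    simp only [Finset.mem_range, not_lt] at hn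
    obtain ⟨k, rfl⟩ := Nat.exists_eq_add_of_le hn
    rw [pow_add, h, zero_mul, smul_zero]

/-- The element `M₀(x,y)` of the Lie group `L₀`. -/
noncomputable def M₀ (x y : ℝ) : Matrix (Fin 4) (Fin 4) ℝ :=
  !![1, x, y, (x ^ 2 + y ^ 2) / 2;
     0, 1, 0, x;
     0, 0, 1, y;
     0, 0, 0, 1]

lemma exp_P (a : ℝ) :
    NormedSpace.exp (!![0, 0, a, 0; 0, 0, 0, 0; 0, 0, 0, a; 0, 0, 0, 0] :
      Matrix (Fin 4) (Fin 4) ℝ) = M₀ 0 a := by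
  rw [exp_nilp3]
  · ext i j
    fin_cases i <;> fin_cases j <;>
      simp [M₀, pow_two, Matrix.mul_apply, Fin.sum_univ_four, Matrix.one_apply] <;>
      norm_num [Matrix.vecHead, Matrix.vecTail] <;> ring
  · ext i j
    fin_cases i <;> fin_cases j <;>
      simp [pow_succ, pow_two, Matrix.mul_apply, Fin.sum_univ_four] <;>
      norm_num [Matrix.vecHead, Matrix.vecTail]

lemma exp_Q (a : ℝ) :
    NormedSpace.exp (!![0, a, 0, 0; 0, 0, 0, a; 0, 0, 0, 0; 0, 0, 0, 0] :
      Matrix (Fin 4) (Fin 4) ℝ) = M₀ a 0 := by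
  rw [exp_nilp3]
  · ext i j
    fin_cases i <;> fin_cases j <;>
      simp [M₀, pow_two, Matrix.mul_apply, Fin.sum_univ_four, Matrix.one_apply] <;>
      norm_num [Matrix.vecHead, Matrix.vecTail] <;> ring
  · ext i j
    fin_cases i <;> fin_cases j <;>
      simp [pow_succ, pow_two, Matrix.mul_apply, Fin.sum_univ_four] <;>
      norm_num [Matrix.vecHead, Matrix.vecTail]

/-- Proposition 4.1 (computation): the exponentials of the pure-translation and
pure-dilation generators converge as `t → 0` to `M₀(0,μ₀)` and `M₀(ν₀,0)`, and the
resulting cusp shape `(ν₀ + i·0)/(0 + i·μ₀)` equals `−i·ν₀/μ₀`, which is purely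
imaginary. -/
theorem stmt_15 (μ ν : ℝ → ℝ) (hμ : ContinuousAt μ 0) (hν : ContinuousAt ν 0)
    (hμ0 : μ 0 ≠ 0) :
    Filter.Tendsto
      (fun t : ℝ => NormedSpace.exp
        (!![0, 0, μ t, 0;
            0, 0, 0, 0;
            0, 0, 0, μ t;
            0, 0, 0, 0] : Matrix (Fin 4) (Fin 4) ℝ))
      (𝓝 0) (𝓝 (M₀ 0 (μ 0))) ∧
    Filter.Tendsto
      (fun t : ℝ => NormedSpace.exp
        (!![0, ν t, 0, 0;
            0, t * ν t, 0, ν t;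
            0, 0, 0, 0;
            0, 0, 0, 0] : Matrix (Fin 4) (Fin 4) ℝ))
      (𝓝 0) (𝓝 (M₀ (ν 0) 0)) ∧
    ((ν 0 : ℂ) + I * (0 : ℝ)) / ((0 : ℝ) + I * (μ 0 : ℝ)) = -I * (ν 0) / (μ 0) ∧
    (((ν 0 : ℂ) + I * (0 : ℝ)) / ((0 : ℝ) + I * (μ 0 : ℝ))).re = 0 := by
  have hden : ((0 : ℝ) : ℂ) + I * (μ 0 : ℝ) ≠ 0 := by
    simp [Complex.ext_iff, hμ0]
  have hshape : ((ν 0 : ℂ) + I * (0 : ℝ)) / ((0 : ℝ) + I * (μ 0 : ℝ)) = -I * (ν 0) / (μ 0) := by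
    rw [div_eq_div_iff hden (by exact_mod_cast hμ0)]
    push_cast
    ring_nf
    simp [I_sq]
  refine ⟨?_, ?_, hshape, ?_⟩
  · have hc : ContinuousAt (fun t : ℝ =>
        (!![0, 0, μ t, 0; 0, 0, 0, 0; 0, 0, 0, μ t; 0, 0, 0, 0] :
          Matrix (Fin 4) (Fin 4) ℝ)) 0 := by
      have : (fun t : ℝ =>
          (!![0, 0, μ t, 0; 0, 0, 0, 0; 0, 0, 0, μ t; 0, 0, 0, 0] :
            Matrix (Fin 4) (Fin 4) ℝ)) = fun t => μ t •
          (!![0, 0, 1, 0; 0, 0, 0, 0; 0, 0, 0, 1; 0, 0, 0, 0] :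
            Matrix (Fin 4) (Fin 4) ℝ) := by
        funext t; ext i j; fin_cases i <;> fin_cases j <;> norm_num [Matrix.vecHead, Matrix.vecTail]
      rw [this]
      exact hμ.smul continuousAt_const
    have := ((NormedSpace.exp_continuous (𝔸 := Matrix (Fin 4) (Fin 4) ℝ)).tendsto _).comp hc
    rw [← exp_P (μ 0)]; exact this
  · have hc : ContinuousAt (fun t : ℝ =>
        (!![0, ν t, 0, 0; 0, t * ν t, 0, ν t; 0, 0, 0, 0; 0, 0, 0, 0] :
          Matrix (Fin 4) (Fin 4) ℝ)) 0 := by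
      have : (fun t : ℝ =>
          (!![0, ν t, 0, 0; 0, t * ν t, 0, ν t; 0, 0, 0, 0; 0, 0, 0, 0] :
            Matrix (Fin 4) (Fin 4) ℝ)) = fun t => ν t •
          (!![0, 1, 0, 0; 0, 0, 0, 1; 0, 0, 0, 0; 0, 0, 0, 0] :
            Matrix (Fin 4) (Fin 4) ℝ) + (t * ν t) •
          (!![0, 0, 0, 0; 0, 1, 0, 0; 0, 0, 0, 0; 0, 0, 0, 0] :
            Matrix (Fin 4) (Fin 4) ℝ) := by
        funext t; ext i j; fin_cases i <;> fin_cases j <;> norm_num [Matrix.vecHead, Matrix.vecTail]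
      rw [this]
      exact (hν.smul continuousAt_const).add ((continuousAt_id.mul hν).smul continuousAt_const)
    have := ((NormedSpace.exp_continuous (𝔸 := Matrix (Fin 4) (Fin 4) ℝ)).tendsto _).comp hc
    have h0 : (!![0, ν 0, 0, 0; 0, (0:ℝ) * ν 0, 0, ν 0; 0, 0, 0, 0; 0, 0, 0, 0] :
        Matrix (Fin 4) (Fin 4) ℝ) =
        !![0, ν 0, 0, 0; 0, 0, 0, ν 0; 0, 0, 0, 0; 0, 0, 0, 0] := by norm_num
    rw [← exp_Q (ν 0), ← h0]; exact this
  · rw [hshape]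
    simp [div_eq_mul_inv]
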